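/- Let the memoryless NEC have capacity C^DMC = (1−ε)log q − H(Z_1|Z̃_1), and let the NEC with stationary noise process {Z_i} have capacity C = (1−ε)log q − (H̄(Z) − H̄(Z̃)). If there exist z_1 ≠ z_1' in 𝒬 and z_2 ∈ 𝒬 ∪ {e} with P(Z_1=z_1) > 0, P(Z_1=z_1') > 0, and P(Z_2=z_2 | Z_1=z_1) ≠ P(Z_2=z_2 | Z_1=z_1'), and {Z_i} is first-order stationary Markov, then C > C^DMC. -/

import Mathlib

open Real BigOperators Finset

/-- Shannon entropy of a probability mass function on a finite alphabet. -/
noncomputable def entropy {α : Type*} [Fintype α] (p : α → ℝ) : ℝ :=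
  ∑ x, Real.negMulLog (p x)

/-- `p` is a probability mass function. -/
def IsPMF {α : Type*} [Fintype α] (p : α → ℝ) : Prop :=
  (∀ x, 0 ≤ p x) ∧ ∑ x, p x = 1

/-- Distribution (pushforward pmf) of a random variable `X` on a finite
probability space with pmf `μ`. -/
noncomputable def pdist {Ω α : Type*} [Fintype Ω] [DecidableEq α]
    (μ : Ω → ℝ) (X : Ω → α) (a : α) : ℝ :=
  ∑ ω, if X ω = a then μ ω else 0

/-- Shannon entropy `H(X)` of a random variable. -/
noncomputable def Hm {Ω α : Type*} [Fintype Ω] [Fintype α] [DecidableEq α]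
    (μ : Ω → ℝ) (X : Ω → α) : ℝ :=
  entropy (pdist μ X)

/-- Conditional entropy `H(X|Y) = H(X,Y) - H(Y)`. -/
noncomputable def condEnt {Ω α β : Type*} [Fintype Ω] [Fintype α] [Fintype β]
    [DecidableEq α] [DecidableEq β] (μ : Ω → ℝ) (X : Ω → α) (Y : Ω → β) : ℝ :=
  Hm μ (fun ω => (X ω, Y ω)) - Hm μ Y

/-- Mutual information `I(X;Y) = H(X) + H(Y) - H(X,Y)`. -/
noncomputable def mutInfo {Ω α β : Type*} [Fintype Ω] [Fintype α] [Fintype β]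
    [DecidableEq α] [DecidableEq β] (μ : Ω → ℝ) (X : Ω → α) (Y : Ω → β) : ℝ :=
  Hm μ X + Hm μ Y - Hm μ (fun ω => (X ω, Y ω))

/-- Conditional mutual information `I(X;Y|W) = H(X|W) + H(Y|W) - H(X,Y|W)`. -/
noncomputable def condMutInfo {Ω α β γ : Type*} [Fintype Ω] [Fintype α] [Fintype β]
    [Fintype γ] [DecidableEq α] [DecidableEq β] [DecidableEq γ]
    (μ : Ω → ℝ) (X : Ω → α) (Y : Ω → β) (W : Ω → γ) : ℝ :=
  condEnt μ X W + condEnt μ Y W - condEnt μ (fun ω => (X ω, Y ω)) W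


set_option linter.unusedSectionVars false
set_option maxHeartbeats 1000000

section Basic
variable {Ω α γ : Type*} [Fintype Ω] [Fintype α] [Fintype γ]
  [DecidableEq α] [DecidableEq γ] (μ : Ω → ℝ)

lemma pdist_nonneg (hμ : ∀ ω, 0 ≤ μ ω) (X : Ω → α) (a : α) : 0 ≤ pdist μ X a :=
  Finset.sum_nonneg fun ω _ => by by_cases h : X ω = a <;> simp [pdist, h, hμ ω]

lemma pdist_comp (X : Ω → α) (h : α → γ) (c : γ) :
    pdist μ (fun ω => h (X ω)) c = ∑ a, if h a = c then pdist μ X a else 0 := by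
  unfold pdist
  have : ∀ a : α, (if h a = c then ∑ ω, if X ω = a then μ ω else 0 else 0)
      = ∑ ω, if X ω = a then (if h a = c then μ ω else 0) else 0 := by
    intro a
    by_cases hac : h a = c <;> simp [hac]
  simp_rw [this]
  rw [Finset.sum_comm]
  congr 1
  funext ω
  simp [Finset.sum_ite_eq]

lemma pdist_congr {Ω' : Type*} [Fintype Ω'] {μ' : Ω' → ℝ} {X : Ω → α} {X' : Ω' → α}
    (hXX' : pdist μ X = pdist μ' X') (h : α → γ) :
    pdist μ (fun ω => h (X ω)) = pdist μ' (fun ω => h (X' ω)) := by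
  funext c
  rw [pdist_comp, pdist_comp, hXX']

lemma Hm_congr {Ω' : Type*} [Fintype Ω'] {μ' : Ω' → ℝ} {X : Ω → α} {X' : Ω' → α}
    (hXX' : pdist μ X = pdist μ' X') : Hm μ X = Hm μ' X' := by
  unfold Hm; rw [hXX']

lemma sum_pdist_mul (X : Ω → α) (h : α → γ) (F : γ → ℝ) :
    ∑ a, pdist μ X a * F (h a) = ∑ c, pdist μ (fun ω => h (X ω)) c * F c := by
  have : ∀ c : γ, pdist μ (fun ω => h (X ω)) c * F c
      = ∑ a, if h a = c then pdist μ X a * F c else 0 := by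
    intro c
    rw [pdist_comp, Finset.sum_mul]
    congr 1; funext a; by_cases hac : h a = c <;> simp [hac]
  simp_rw [this]
  rw [Finset.sum_comm]
  congr 1; funext a
  simp [Finset.sum_ite_eq']

lemma sum_pdist_eq_one (hμ : IsPMF μ) (X : Ω → α) : ∑ a, pdist μ X a = 1 := by
  unfold pdist
  rw [Finset.sum_comm]
  rw [← hμ.2]
  congr 1; funext ω
  simp [Finset.sum_ite_eq]

lemma pdist_mono_comp (hμ : ∀ ω, 0 ≤ μ ω) (X : Ω → α) (h : α → γ) (a : α) :
    pdist μ X a ≤ pdist μ (fun ω => h (X ω)) (h a) := by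
  unfold pdist
  apply Finset.sum_le_sum
  intro ω _
  by_cases hxa : X ω = a
  · simp [hxa]
  · simp [hxa]
    by_cases hh : h (X ω) = h a <;> simp [hh, hμ ω]

lemma Hm_eq_neg_sum (X : Ω → α) :
    Hm μ X = -∑ a, pdist μ X a * Real.log (pdist μ X a) := by
  unfold Hm entropy
  simp [Real.negMulLog, Finset.sum_neg_distrib]

lemma Hm_comp_inj (X : Ω → α) (h : α → γ) (hinj : Function.Injective h) :
    Hm μ (fun ω => h (X ω)) = Hm μ X := by
  unfold Hm entropy
  rw [← Finset.sum_subset (Finset.subset_univ (Finset.univ.image h))]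
  · rw [Finset.sum_image (fun a _ b _ hab => hinj hab)]
    congr 1; funext a
    congr 1
    rw [pdist_comp]
    simp [hinj.eq_iff, Finset.sum_ite_eq']
  · intro c _ hc
    have : pdist μ (fun ω => h (X ω)) c = 0 := by
      rw [pdist_comp]
      apply Finset.sum_eq_zero
      intro a _
      have : h a ≠ c := fun hac => hc (Finset.mem_image.2 ⟨a, Finset.mem_univ a, hac⟩)
      simp [this]
    simp [this]

lemma Hm_of_subsingleton [Subsingleton α] (hμ : IsPMF μ) (X : Ω → α) : Hm μ X = 0 := by
  unfold Hm entropy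
  apply Finset.sum_eq_zero
  intro a _
  have : pdist μ X a = 1 := by
    unfold pdist
    rw [← hμ.2]
    congr 1; funext ω
    simp [Subsingleton.elim (X ω) a]
  simp [this]


lemma sum_pdistXY_mul {Ω α β γ δ : Type*} [Fintype Ω] [Fintype α] [Fintype β] [Fintype γ]
    [Fintype δ] [DecidableEq α] [DecidableEq β] [DecidableEq γ] [DecidableEq δ]
    (μ : Ω → ℝ) (X : Ω → α) (Y : Ω → β) (f : α → γ) (g : β → δ) (T : γ → δ → ℝ) :
    ∑ z : α × β, pdist μ X z.1 * (pdist μ Y z.2 * T (f z.1) (g z.2))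
      = ∑ c, pdist μ (fun ω => f (X ω)) c
          * ∑ d, pdist μ (fun ω => g (Y ω)) d * T c d := by
  rw [Fintype.sum_prod_type]
  have e1 : ∀ x, ∑ y, pdist μ X x * (pdist μ Y y * T (f x) (g y))
      = pdist μ X x * ∑ d, pdist μ (fun ω => g (Y ω)) d * T (f x) d := by
    intro x
    rw [← Finset.mul_sum, sum_pdist_mul μ Y g (T (f x))]
  simp_rw [e1]
  exact sum_pdist_mul μ X f (fun c => ∑ d, pdist μ (fun ω => g (Y ω)) d * T c d)

end Basic


lemma gibbs {ι : Type*} [Fintype ι] (p q : ι → ℝ)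
    (hp : ∀ i, 0 ≤ p i) (hq : ∀ i, 0 ≤ q i)
    (hsum : ∑ i, p i = ∑ i, q i) (habs : ∀ i, q i = 0 → p i = 0) :
    0 ≤ ∑ i, p i * (Real.log (p i) - Real.log (q i)) ∧
      (∑ i, p i * (Real.log (p i) - Real.log (q i)) = 0 → p = q) := by
  set g : ι → ℝ := fun i => p i * (Real.log (p i) - Real.log (q i)) - (p i - q i) with hg
  have key : ∀ i, 0 < p i →
      q i - p i ≤ p i * (Real.log (q i) - Real.log (p i)) → False → True := fun _ _ _ _ => trivial
  have hqpos : ∀ i, 0 < p i → 0 < q i := by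
    intro i hpi
    rcases eq_or_lt_of_le (hq i) with h0 | h; · exact absurd (habs i h0.symm) (by linarith)
    exact h
  have hgnn : ∀ i, 0 ≤ g i := by
    intro i
    rcases eq_or_lt_of_le (hp i) with h0 | hpi
    · simp only [hg, ← h0, zero_mul, zero_sub, sub_zero, neg_sub]
      simpa using hq i
    · have hqi := hqpos i hpi
      have hlog : Real.log (q i / p i) ≤ q i / p i - 1 :=
        Real.log_le_sub_one_of_pos (div_pos hqi hpi)
      rw [Real.log_div (ne_of_gt hqi) (ne_of_gt hpi)] at hlog
      have h2 := mul_le_mul_of_nonneg_left hlog (le_of_lt hpi)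
      have h3 : p i * (q i / p i - 1) = q i - p i := by field_simp
      simp only [hg]
      nlinarith
  have hsum0 : ∑ i, g i = ∑ i, p i * (Real.log (p i) - Real.log (q i)) := by
    simp only [hg, Finset.sum_sub_distrib, hsum]
    ring
  constructor
  · rw [← hsum0]; exact Finset.sum_nonneg fun i _ => hgnn i
  · intro h0
    have hall : ∀ i ∈ Finset.univ, g i = 0 :=
      (Finset.sum_eq_zero_iff_of_nonneg (fun i _ => hgnn i)).1 (by rw [hsum0, h0])
    funext i
    have hi := hall i (Finset.mem_univ i)
    rcases eq_or_lt_of_le (hp i) with h0' | hpi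
    · simp only [hg, ← h0', zero_mul, zero_sub, sub_zero, neg_sub] at hi ⊢
      linarith [hi]
    · have hqi := hqpos i hpi
      by_contra hne
      have hx : q i / p i ≠ 1 := by
        intro h
        rw [div_eq_one_iff_eq (ne_of_gt hpi)] at h
        exact hne h.symm
      have hlog : Real.log (q i / p i) < q i / p i - 1 :=
        Real.log_lt_sub_one_of_pos (div_pos hqi hpi) hx
      rw [Real.log_div (ne_of_gt hqi) (ne_of_gt hpi)] at hlog
      have h2 := mul_lt_mul_of_pos_left hlog hpi
      have h3 : p i * (q i / p i - 1) = q i - p i := by field_simp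
      simp only [hg] at hi
      nlinarith

section DP
variable {Ω α β γ δ : Type*} [Fintype Ω] [Fintype α] [Fintype β] [Fintype γ] [Fintype δ]
  [DecidableEq α] [DecidableEq β] [DecidableEq γ] [DecidableEq δ]

lemma mutInfo_comp_le (μ : Ω → ℝ) (hμ : IsPMF μ) (X : Ω → α) (Y : Ω → β)
    (f : α → γ) (g : β → δ) :
    mutInfo μ (fun ω => f (X ω)) (fun ω => g (Y ω)) ≤ mutInfo μ X Y ∧
    (mutInfo μ X Y = mutInfo μ (fun ω => f (X ω)) (fun ω => g (Y ω)) →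
      ∀ x y, pdist μ (fun ω => (X ω, Y ω)) (x, y)
        = pdist μ X x * (pdist μ Y y
          * (pdist μ (fun ω => (f (X ω), g (Y ω))) (f x, g y)
            / (pdist μ (fun ω => f (X ω)) (f x) * pdist μ (fun ω => g (Y ω)) (g y))))) := by
  classical
  set XY : Ω → α × β := fun ω => (X ω, Y ω) with hXY
  set FG : Ω → γ × δ := fun ω => (f (X ω), g (Y ω)) with hFG
  set p : α × β → ℝ := pdist μ XY with hpdef
  set q : α × β → ℝ := fun z => pdist μ X z.1 * (pdist μ Y z.2
    * (pdist μ FG (f z.1, g z.2)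
      / (pdist μ (fun ω => f (X ω)) (f z.1) * pdist μ (fun ω => g (Y ω)) (g z.2)))) with hqdef
  have hμ0 := hμ.1
  have hp : ∀ z, 0 ≤ p z := fun z => pdist_nonneg μ hμ0 XY z
  have hq : ∀ z, 0 ≤ q z := by
    intro z
    apply mul_nonneg (pdist_nonneg μ hμ0 X _)
    apply mul_nonneg (pdist_nonneg μ hμ0 Y _)
    apply div_nonneg (pdist_nonneg μ hμ0 FG _)
    exact mul_nonneg (pdist_nonneg μ hμ0 _ _) (pdist_nonneg μ hμ0 _ _)
  have hposX : ∀ z : α × β, 0 < p z → 0 < pdist μ X z.1 := fun z hz =>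
    lt_of_lt_of_le hz (pdist_mono_comp μ hμ0 XY Prod.fst z)
  have hposY : ∀ z : α × β, 0 < p z → 0 < pdist μ Y z.2 := fun z hz =>
    lt_of_lt_of_le hz (pdist_mono_comp μ hμ0 XY Prod.snd z)
  have hposFG : ∀ z : α × β, 0 < p z → 0 < pdist μ FG (f z.1, g z.2) := fun z hz =>
    lt_of_lt_of_le hz (pdist_mono_comp μ hμ0 XY (fun w => (f w.1, g w.2)) z)
  have hposf : ∀ z : α × β, 0 < p z → 0 < pdist μ (fun ω => f (X ω)) (f z.1) := fun z hz =>
    lt_of_lt_of_le hz (pdist_mono_comp μ hμ0 XY (fun w => f w.1) z)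
  have hposg : ∀ z : α × β, 0 < p z → 0 < pdist μ (fun ω => g (Y ω)) (g z.2) := fun z hz =>
    lt_of_lt_of_le hz (pdist_mono_comp μ hμ0 XY (fun w => g w.2) z)
  have habs : ∀ z, q z = 0 → p z = 0 := by
    intro z hz
    by_contra hpz
    have hpz' : 0 < p z := lt_of_le_of_ne (hp z) (Ne.symm hpz)
    have : 0 < q z := by
      apply mul_pos (hposX z hpz')
      apply mul_pos (hposY z hpz')
      exact div_pos (hposFG z hpz') (mul_pos (hposf z hpz') (hposg z hpz'))
    linarith
  have hFGf : ∀ (c : γ) (d : δ), pdist μ FG (c, d) ≤ pdist μ (fun ω => f (X ω)) c :=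
    fun c d => pdist_mono_comp μ hμ0 FG Prod.fst (c, d)
  have hFGg : ∀ (c : γ) (d : δ), pdist μ FG (c, d) ≤ pdist μ (fun ω => g (Y ω)) d :=
    fun c d => pdist_mono_comp μ hμ0 FG Prod.snd (c, d)
  have hsumq : ∑ z, q z = 1 := by
    have hQ : ∑ z, q z = ∑ c, pdist μ (fun ω => f (X ω)) c
        * ∑ d, pdist μ (fun ω => g (Y ω)) d
          * (pdist μ FG (c, d) / (pdist μ (fun ω => f (X ω)) c * pdist μ (fun ω => g (Y ω)) d)) :=
      sum_pdistXY_mul μ X Y f g (fun c d =>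
        pdist μ FG (c, d) / (pdist μ (fun ω => f (X ω)) c * pdist μ (fun ω => g (Y ω)) d))
    rw [hQ]
    have h2 : ∀ c d, pdist μ (fun ω => f (X ω)) c * (pdist μ (fun ω => g (Y ω)) d
        * (pdist μ FG (c, d) / (pdist μ (fun ω => f (X ω)) c * pdist μ (fun ω => g (Y ω)) d)))
        = pdist μ FG (c, d) := by
      intro c d
      rcases eq_or_lt_of_le (pdist_nonneg μ hμ0 (fun ω => f (X ω)) c) with hc | hc
      · have h0 : pdist μ FG (c, d) = 0 :=
          le_antisymm (hc ▸ hFGf c d) (pdist_nonneg μ hμ0 FG _)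
        rw [h0, ← hc]; ring
      rcases eq_or_lt_of_le (pdist_nonneg μ hμ0 (fun ω => g (Y ω)) d) with hd | hd
      · have h0 : pdist μ FG (c, d) = 0 :=
          le_antisymm (hd ▸ hFGg c d) (pdist_nonneg μ hμ0 FG _)
        rw [h0, ← hd]; ring
      field_simp
    have h3 : ∀ c, pdist μ (fun ω => f (X ω)) c * ∑ d, pdist μ (fun ω => g (Y ω)) d
        * (pdist μ FG (c, d) / (pdist μ (fun ω => f (X ω)) c * pdist μ (fun ω => g (Y ω)) d))
        = ∑ d, pdist μ FG (c, d) := by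
      intro c
      rw [Finset.mul_sum]
      congr 1; funext d
      exact h2 c d
    simp_rw [h3]
    rw [← Fintype.sum_prod_type]
    exact sum_pdist_eq_one μ hμ FG
  have hsump : ∑ z, p z = 1 := sum_pdist_eq_one μ hμ XY
  obtain ⟨hD0, hDeq⟩ := gibbs p q hp hq (by rw [hsump, hsumq]) habs
  have hlogq : ∀ z : α × β, p z * Real.log (q z)
      = p z * Real.log (pdist μ X z.1) + p z * Real.log (pdist μ Y z.2)
        + p z * Real.log (pdist μ FG (f z.1, g z.2))
        - p z * Real.log (pdist μ (fun ω => f (X ω)) (f z.1))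
        - p z * Real.log (pdist μ (fun ω => g (Y ω)) (g z.2)) := by
    intro z
    rcases eq_or_lt_of_le (hp z) with h0 | hpz
    · rw [← h0]; ring
    · have h1 := hposX z hpz
      have h2 := hposY z hpz
      have h3 := hposFG z hpz
      have h4 := hposf z hpz
      have h5 := hposg z hpz
      have hqz : q z = pdist μ X z.1 * (pdist μ Y z.2
          * (pdist μ FG (f z.1, g z.2)
            / (pdist μ (fun ω => f (X ω)) (f z.1) * pdist μ (fun ω => g (Y ω)) (g z.2)))) := rfl
      rw [hqz, Real.log_mul (ne_of_gt h1) (by positivity),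
          Real.log_mul (ne_of_gt h2) (by positivity),
          Real.log_div (ne_of_gt h3) (by positivity),
          Real.log_mul (ne_of_gt h4) (ne_of_gt h5)]
      ring
  have hD : ∑ z, p z * (Real.log (p z) - Real.log (q z))
      = mutInfo μ X Y - mutInfo μ (fun ω => f (X ω)) (fun ω => g (Y ω)) := by
    have e0 : ∑ z, p z * (Real.log (p z) - Real.log (q z))
        = ∑ z, p z * Real.log (p z) - ∑ z, p z * Real.log (q z) := by
      rw [← Finset.sum_sub_distrib]
      congr 1; funext z; ring
    rw [e0]
    have e1 : ∑ z : α × β, p z * Real.log (q z)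
        = ∑ z : α × β, p z * Real.log (pdist μ X z.1)
          + ∑ z : α × β, p z * Real.log (pdist μ Y z.2)
          + ∑ z : α × β, p z * Real.log (pdist μ FG (f z.1, g z.2))
          - ∑ z : α × β, p z * Real.log (pdist μ (fun ω => f (X ω)) (f z.1))
          - ∑ z : α × β, p z * Real.log (pdist μ (fun ω => g (Y ω)) (g z.2)) := by
      rw [← Finset.sum_add_distrib, ← Finset.sum_add_distrib,
        ← Finset.sum_sub_distrib, ← Finset.sum_sub_distrib]
      congr 1; funext z
      rw [hlogq z]
    have eX : ∑ z : α × β, p z * Real.log (pdist μ X z.1)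
        = ∑ c, pdist μ X c * Real.log (pdist μ X c) :=
      sum_pdist_mul μ XY Prod.fst (fun c => Real.log (pdist μ X c))
    have eY : ∑ z : α × β, p z * Real.log (pdist μ Y z.2)
        = ∑ c, pdist μ Y c * Real.log (pdist μ Y c) :=
      sum_pdist_mul μ XY Prod.snd (fun c => Real.log (pdist μ Y c))
    have eFG : ∑ z : α × β, p z * Real.log (pdist μ FG (f z.1, g z.2))
        = ∑ c, pdist μ FG c * Real.log (pdist μ FG c) :=
      sum_pdist_mul μ XY (fun w => (f w.1, g w.2)) (fun c => Real.log (pdist μ FG c))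
    have ef : ∑ z : α × β, p z * Real.log (pdist μ (fun ω => f (X ω)) (f z.1))
        = ∑ c, pdist μ (fun ω => f (X ω)) c * Real.log (pdist μ (fun ω => f (X ω)) c) :=
      sum_pdist_mul μ XY (fun w => f w.1) (fun c => Real.log (pdist μ (fun ω => f (X ω)) c))
    have eg : ∑ z : α × β, p z * Real.log (pdist μ (fun ω => g (Y ω)) (g z.2))
        = ∑ c, pdist μ (fun ω => g (Y ω)) c * Real.log (pdist μ (fun ω => g (Y ω)) c) :=
      sum_pdist_mul μ XY (fun w => g w.2) (fun c => Real.log (pdist μ (fun ω => g (Y ω)) c))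
    have hHXY : Hm μ XY = -∑ z, p z * Real.log (p z) := Hm_eq_neg_sum μ XY
    have hHX : Hm μ X = -∑ c, pdist μ X c * Real.log (pdist μ X c) := Hm_eq_neg_sum μ X
    have hHY : Hm μ Y = -∑ c, pdist μ Y c * Real.log (pdist μ Y c) := Hm_eq_neg_sum μ Y
    have hHFG : Hm μ FG = -∑ c, pdist μ FG c * Real.log (pdist μ FG c) := Hm_eq_neg_sum μ FG
    have hHf : Hm μ (fun ω => f (X ω))
        = -∑ c, pdist μ (fun ω => f (X ω)) c * Real.log (pdist μ (fun ω => f (X ω)) c) :=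
      Hm_eq_neg_sum μ (fun ω => f (X ω))
    have hHg : Hm μ (fun ω => g (Y ω))
        = -∑ c, pdist μ (fun ω => g (Y ω)) c * Real.log (pdist μ (fun ω => g (Y ω)) c) :=
      Hm_eq_neg_sum μ (fun ω => g (Y ω))
    have hmut1 : mutInfo μ X Y = Hm μ X + Hm μ Y - Hm μ XY := rfl
    have hmut2 : mutInfo μ (fun ω => f (X ω)) (fun ω => g (Y ω))
        = Hm μ (fun ω => f (X ω)) + Hm μ (fun ω => g (Y ω)) - Hm μ FG := rfl
    rw [e1, eX, eY, eFG, ef, eg, hmut1, hmut2]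
    rw [hHXY, hHX, hHY, hHFG, hHf, hHg]
    ring
  constructor
  · rw [hD] at hD0; linarith
  · intro hEq x y
    have hz : ∑ z, p z * (Real.log (p z) - Real.log (q z)) = 0 := by rw [hD, hEq]; ring
    exact congrFun (hDeq hz) (x, y)

end DP

/-- Split a tuple of length `m+2` into the first `m` coordinates and the last two. -/
def splitMap {κ : Type*} (m : ℕ) (v : Fin (m+2) → κ) : (Fin m → κ) × (κ × κ) :=
  (fun i => v ⟨i.1, by omega⟩, (v ⟨m, by omega⟩, v ⟨m+1, by omega⟩))

lemma splitMap_inj {κ : Type*} (m : ℕ) : Function.Injective (splitMap (κ := κ) m) := by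
  intro u v h
  funext j
  rcases j with ⟨j, hj⟩
  by_cases h1 : j < m
  · exact congrFun (congrArg Prod.fst h) ⟨j, h1⟩
  · by_cases h2 : j = m
    · subst h2; exact congrArg (fun t => t.2.1) h
    · have h3 : j = m + 1 := by omega
      subst h3; exact congrArg (fun t => t.2.2) h

theorem stmt16' : True := trivial

/-- for an NEC with stationary first-order Markov noise-erasure
process whose transition kernel genuinely varies with the conditioning state
(on two positive-probability non-erasure states), the capacity with memory
`(1-ε) log q - (H̄(Z) - H̄(Z̃))` strictly exceeds the capacity
`(1-ε) log q - H(Z_1|Z̃_1)` of the memoryless counterpart. -/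
theorem stmt16 {Ω : Type*} [Fintype Ω] {q : ℕ}
    (μ : Ω → ℝ) (hμ : IsPMF μ)
    (Z : ℕ → Ω → Option (Fin q))
    (hstat : ∀ k n : ℕ, pdist μ (fun ω => fun i : Fin n => Z (k + i.1) ω)
      = pdist μ (fun ω => fun i : Fin n => Z i.1 ω))
    (hmarkov : ∀ (n : ℕ) (w : Fin n → Option (Fin q)) (a b : Option (Fin q)),
      pdist μ (fun ω => ((fun i : Fin n => Z i.1 ω), Z n ω, Z (n+1) ω)) (w, a, b)
          * pdist μ (Z n) a
        = pdist μ (fun ω => ((fun i : Fin n => Z i.1 ω), Z n ω)) (w, a)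
          * pdist μ (fun ω => (Z n ω, Z (n+1) ω)) (a, b))
    (z₁ z₁' : Fin q) (z₂ : Option (Fin q)) (hne : z₁ ≠ z₁')
    (hp1 : 0 < pdist μ (Z 0) (some z₁)) (hp2 : 0 < pdist μ (Z 0) (some z₁'))
    (hdiff : pdist μ (fun ω => (Z 0 ω, Z 1 ω)) (some z₁, z₂)
        * pdist μ (Z 0) (some z₁')
      ≠ pdist μ (fun ω => (Z 0 ω, Z 1 ω)) (some z₁', z₂)
        * pdist μ (Z 0) (some z₁))
    (hz hzt : ℝ)
    (hHZ : Filter.Tendsto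
      (fun n : ℕ => Hm μ (fun ω => fun i : Fin n => Z i.1 ω) / (n : ℝ))
      Filter.atTop (nhds hz))
    (hHZt : Filter.Tendsto
      (fun n : ℕ => Hm μ (fun ω => fun i : Fin n => (Z i.1 ω).isNone) / (n : ℝ))
      Filter.atTop (nhds hzt)) :
    (1 - pdist μ (Z 0) none) * Real.log (q : ℝ) - (hz - hzt)
      > (1 - pdist μ (Z 0) none) * Real.log (q : ℝ)
        - condEnt μ (Z 0) (fun ω => (Z 0 ω).isNone) := by
  have hμ0 := hμ.1
  set HP : ℝ := Hm μ (fun ω => (Z 0 ω, Z 1 ω)) with hHP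
  set HPt : ℝ := Hm μ (fun ω => ((Z 0 ω).isNone, (Z 1 ω).isNone)) with hHPt
  -- Step A : strict data processing inequality for the pair (Z 0, Z 1)
  have hIlt : mutInfo μ (fun ω => (Z 0 ω).isNone) (fun ω => (Z 1 ω).isNone)
      < mutInfo μ (Z 0) (Z 1) := by
    obtain ⟨hle, heq⟩ := mutInfo_comp_le μ hμ (Z 0) (Z 1) Option.isNone Option.isNone
    rcases lt_or_eq_of_le hle with h | h
    · exact h
    · exfalso
      have h1 := heq h.symm (some z₁) z₂
      have h2 := heq h.symm (some z₁') z₂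
      simp only [Option.isNone_some] at h1 h2
      apply hdiff
      rw [h1, h2]
      ring
  -- Step B : one-step stationarity
  have hstat1 : pdist μ (Z 1) = pdist μ (Z 0) :=
    pdist_congr μ (hstat 1 1) (fun v : Fin 1 → Option (Fin q) => v ⟨0, Nat.zero_lt_one⟩)
  have hH1 : Hm μ (Z 1) = Hm μ (Z 0) := Hm_congr μ hstat1
  have hstat1' : pdist μ (fun ω => (Z 1 ω).isNone) = pdist μ (fun ω => (Z 0 ω).isNone) :=
    pdist_congr μ hstat1 Option.isNone
  have hH1' : Hm μ (fun ω => (Z 1 ω).isNone) = Hm μ (fun ω => (Z 0 ω).isNone) :=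
    Hm_congr μ hstat1'
  -- Step C : conditional entropy identity
  have hCE : condEnt μ (Z 0) (fun ω => (Z 0 ω).isNone)
      = Hm μ (Z 0) - Hm μ (fun ω => (Z 0 ω).isNone) := by
    have e : Hm μ (fun ω => (Z 0 ω, (Z 0 ω).isNone)) = Hm μ (Z 0) :=
      Hm_comp_inj μ (Z 0) (fun a => (a, a.isNone)) (fun a b hab => congrArg Prod.fst hab)
    simp only [condEnt]
    rw [e]
  -- Step D : the pair entropy gap is strictly below twice the conditional entropy
  have hIeq : mutInfo μ (Z 0) (Z 1) = Hm μ (Z 0) + Hm μ (Z 1) - HP := rfl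
  have hIteq : mutInfo μ (fun ω => (Z 0 ω).isNone) (fun ω => (Z 1 ω).isNone)
      = Hm μ (fun ω => (Z 0 ω).isNone) + Hm μ (fun ω => (Z 1 ω).isNone) - HPt := rfl
  have hgap : HP - HPt < 2 * condEnt μ (Z 0) (fun ω => (Z 0 ω).isNone) := by
    rw [hCE]
    linarith [hIlt, hIeq, hIteq, hH1, hH1']
  -- Step E : one step of subadditivity
  have hstep : ∀ m : ℕ,
      Hm μ (fun ω => fun i : Fin (m+2) => Z i.1 ω)
        - Hm μ (fun ω => fun i : Fin (m+2) => (Z i.1 ω).isNone)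
      ≤ (Hm μ (fun ω => fun i : Fin m => Z i.1 ω)
          - Hm μ (fun ω => fun i : Fin m => (Z i.1 ω).isNone)) + (HP - HPt) := by
    intro m
    have e1 : Hm μ (fun ω => ((fun i : Fin m => Z i.1 ω), (Z m ω, Z (m+1) ω)))
        = Hm μ (fun ω => fun i : Fin (m+2) => Z i.1 ω) :=
      Hm_comp_inj μ (fun ω => fun i : Fin (m+2) => Z i.1 ω) (splitMap m) (splitMap_inj m)
    have e2 : Hm μ (fun ω => ((fun i : Fin m => (Z i.1 ω).isNone),
          ((Z m ω).isNone, (Z (m+1) ω).isNone)))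
        = Hm μ (fun ω => fun i : Fin (m+2) => (Z i.1 ω).isNone) :=
      Hm_comp_inj μ (fun ω => fun i : Fin (m+2) => (Z i.1 ω).isNone) (splitMap m) (splitMap_inj m)
    obtain ⟨hle, -⟩ := mutInfo_comp_le μ hμ (fun ω => fun i : Fin m => Z i.1 ω)
      (fun ω => (Z m ω, Z (m+1) ω)) (fun v => fun i => (v i).isNone)
      (fun p => (p.1.isNone, p.2.isNone))
    have hle' :
        Hm μ (fun ω => fun i : Fin m => (Z i.1 ω).isNone)
          + Hm μ (fun ω => ((Z m ω).isNone, (Z (m+1) ω).isNone))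
          - Hm μ (fun ω => ((fun i : Fin m => (Z i.1 ω).isNone),
              ((Z m ω).isNone, (Z (m+1) ω).isNone)))
        ≤ Hm μ (fun ω => fun i : Fin m => Z i.1 ω) + Hm μ (fun ω => (Z m ω, Z (m+1) ω))
          - Hm μ (fun ω => ((fun i : Fin m => Z i.1 ω), (Z m ω, Z (m+1) ω))) := hle
    have hps : pdist μ (fun ω => fun i : Fin 2 => Z (m + i.1) ω)
        = pdist μ (fun ω => fun i : Fin 2 => Z i.1 ω) := hstat m 2
    have hp2 : pdist μ (fun ω => (Z m ω, Z (m+1) ω)) = pdist μ (fun ω => (Z 0 ω, Z 1 ω)) :=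
      pdist_congr μ hps (fun v : Fin 2 → Option (Fin q) =>
        (v ⟨0, by omega⟩, v ⟨1, by omega⟩))
    have hHp2 : Hm μ (fun ω => (Z m ω, Z (m+1) ω)) = HP := Hm_congr μ hp2
    have hp2t : pdist μ (fun ω => ((Z m ω).isNone, (Z (m+1) ω).isNone))
        = pdist μ (fun ω => ((Z 0 ω).isNone, (Z 1 ω).isNone)) :=
      pdist_congr μ hps (fun v : Fin 2 → Option (Fin q) =>
        ((v ⟨0, by omega⟩).isNone, (v ⟨1, by omega⟩).isNone))
    have hHp2t : Hm μ (fun ω => ((Z m ω).isNone, (Z (m+1) ω).isNone)) = HPt := Hm_congr μ hp2t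
    linarith [e1, e2, hle', hHp2, hHp2t]
  -- Step F : iterated bound
  have hind : ∀ n : ℕ,
      Hm μ (fun ω => fun i : Fin (2*n) => Z i.1 ω)
        - Hm μ (fun ω => fun i : Fin (2*n) => (Z i.1 ω).isNone) ≤ (n : ℝ) * (HP - HPt) := by
    intro n
    induction n with
    | zero =>
      haveI hs1 : Subsingleton (Fin (2*0) → Option (Fin q)) :=
        ⟨fun a b => funext fun i => i.elim0⟩
      haveI hs2 : Subsingleton (Fin (2*0) → Bool) :=
        ⟨fun a b => funext fun i => i.elim0⟩
      rw [Hm_of_subsingleton μ hμ, Hm_of_subsingleton μ hμ]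
      simp
    | succ k ih =>
      have hs : Hm μ (fun ω => fun i : Fin (2*(k+1)) => Z i.1 ω)
          - Hm μ (fun ω => fun i : Fin (2*(k+1)) => (Z i.1 ω).isNone)
          ≤ (Hm μ (fun ω => fun i : Fin (2*k) => Z i.1 ω)
              - Hm μ (fun ω => fun i : Fin (2*k) => (Z i.1 ω).isNone)) + (HP - HPt) :=
        hstep (2*k)
      push_cast
      push_cast at ih
      linarith
  -- Step G : pass to the limit
  have htwo : Filter.Tendsto (fun n : ℕ => 2*n) Filter.atTop Filter.atTop :=
    Filter.tendsto_atTop_atTop.mpr fun b => ⟨b, fun a ha => by omega⟩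
  have hTend : Filter.Tendsto
      (fun n : ℕ => (Hm μ (fun ω => fun i : Fin n => Z i.1 ω)
        - Hm μ (fun ω => fun i : Fin n => (Z i.1 ω).isNone)) / (n : ℝ))
      Filter.atTop (nhds (hz - hzt)) := by
    have h := hHZ.sub hHZt
    simpa [sub_div] using h
  have h2n : Filter.Tendsto
      (fun n : ℕ => (Hm μ (fun ω => fun i : Fin (2*n) => Z i.1 ω)
        - Hm μ (fun ω => fun i : Fin (2*n) => (Z i.1 ω).isNone)) / ((2*n : ℕ) : ℝ))
      Filter.atTop (nhds (hz - hzt)) := hTend.comp htwo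
  have hle2 : hz - hzt ≤ (HP - HPt) / 2 := by
    apply le_of_tendsto h2n
    filter_upwards [Filter.eventually_ge_atTop 1] with n hn
    have hb := hind n
    have hn' : (1:ℝ) ≤ (n:ℝ) := by exact_mod_cast hn
    have hne : ((2*n : ℕ) : ℝ) = 2 * (n:ℝ) := by push_cast; ring
    have hnz : (n:ℝ) ≠ 0 := by linarith
    calc (Hm μ (fun ω => fun i : Fin (2*n) => Z i.1 ω)
          - Hm μ (fun ω => fun i : Fin (2*n) => (Z i.1 ω).isNone)) / ((2*n : ℕ) : ℝ)
        ≤ ((n:ℝ) * (HP - HPt)) / ((2*n : ℕ) : ℝ) := by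
          have hpos : (0:ℝ) < ((2*n:ℕ):ℝ) := by rw [hne]; linarith
          exact (div_le_div_iff_of_pos_right hpos).mpr hb
      _ = (HP - HPt) / 2 := by rw [hne]; field_simp
  -- Step H : conclude
  have hfinal : hz - hzt < condEnt μ (Z 0) (fun ω => (Z 0 ω).isNone) := by linarith
  linarith
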